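/- For d = 2 and 1/2 ≤ p_1 < p_2 ≤ 1, there exists a coupling of the random variables L*(p_1) and L*(p_2) such that L*(p_1) ≤ L*(p_2) almost surely; i.e., L*(p_2) stochastically dominates L*(p_1). -/

import Mathlib

open MeasureTheory Finset
open scoped ENNReal

noncomputable def c2 (k : ℕ) : ℝ := (Nat.choose (2 * k) k : ℝ) / (k + 1)

noncomputable def eta2 (p : ℝ) (k : ℕ) : ℝ := c2 k * p ^ k * (1 - p) ^ (k + 1)

noncomputable def etaInf2 (p : ℝ) : ℝ := (2 * p - 1) / p

lemma c2_eq_catalan (k : ℕ) : c2 k = (catalan k : ℝ) := by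
  have h := succ_mul_catalan_eq_centralBinom k
  have h' : ((k : ℝ) + 1) * (catalan k : ℝ) = (Nat.choose (2 * k) k : ℝ) := by
    exact_mod_cast congrArg (Nat.cast : ℕ → ℝ) h
  have hk : (k : ℝ) + 1 ≠ 0 := by positivity
  unfold c2
  rw [div_eq_iff hk]
  linarith [h']

lemma c2_nonneg (k : ℕ) : 0 ≤ c2 k := by
  unfold c2; positivity

lemma c2_zero : c2 0 = 1 := by simp [c2]

lemma c2_succ (n : ℕ) : c2 (n + 1) = ∑ i ∈ range (n + 1), c2 i * c2 (n - i) := by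
  simp only [c2_eq_catalan]
  rw [catalan_succ]
  push_cast
  exact Fin.sum_univ_eq_sum_range (fun i => (catalan i : ℝ) * (catalan (n - i) : ℝ)) (n + 1)

/-- Partial sums of the Catalan generating series are bounded by `(1-√(1-4x))/2`. -/
lemma double_sum_le (g : ℕ → ℝ) (hg : ∀ k, 0 ≤ g k) (N : ℕ) :
    ∑ k ∈ range N, ∑ i ∈ range (k + 1), g i * g (k - i)
      ≤ (∑ k ∈ range N, g k) ^ 2 := by
  rw [sq, Finset.sum_mul_sum]
  rw [Finset.sum_sigma' (range N) (fun k => range (k + 1)) (fun k i => g i * g (k - i))]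
  rw [← Finset.sum_product' (range N) (range N) (fun i j => g i * g j)]
  have h1 : ∑ x ∈ (range N).sigma (fun k => range (k + 1)), g x.2 * g (x.1 - x.2)
      = ∑ p ∈ (range N ×ˢ range N).filter (fun p => p.1 + p.2 < N), g p.1 * g p.2 := by
    refine Finset.sum_nbij' (fun x => (x.2, x.1 - x.2)) (fun p => ⟨p.1 + p.2, p.1⟩) ?_ ?_ ?_ ?_ ?_
    · rintro ⟨k, i⟩ hx
      simp only [Finset.mem_sigma, Finset.mem_range] at hx
      simp only [Finset.mem_filter, Finset.mem_product, Finset.mem_range]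
      omega
    · rintro ⟨i, j⟩ hp
      simp only [Finset.mem_filter, Finset.mem_product, Finset.mem_range] at hp
      simp only [Finset.mem_sigma, Finset.mem_range]
      omega
    · rintro ⟨k, i⟩ hx
      simp only [Finset.mem_sigma, Finset.mem_range] at hx
      simp only [Sigma.mk.inj_iff]
      constructor
      · omega
      · exact heq_of_eq rfl
    · rintro ⟨i, j⟩ hp
      simp
    · rintro ⟨k, i⟩ hx
      rfl
  rw [h1]
  refine Finset.sum_le_sum_of_subset_of_nonneg (Finset.filter_subset _ _) ?_
  intro p _ _
  exact mul_nonneg (hg _) (hg _)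

lemma catalanSum (x : ℝ) (hx0 : 0 ≤ x) (hx : x ≤ 1 / 4) :
    HasSum (fun k => c2 k * x ^ (k + 1)) ((1 - Real.sqrt (1 - 4 * x)) / 2) := by
  set u := Real.sqrt (1 - 4 * x) with hu
  have hu0 : 0 ≤ u := Real.sqrt_nonneg _
  have husq : u ^ 2 = 1 - 4 * x := Real.sq_sqrt (by linarith)
  have hu1 : u ≤ 1 := by
    rw [hu]
    calc Real.sqrt (1 - 4 * x) ≤ Real.sqrt 1 := Real.sqrt_le_sqrt (by linarith)
    _ = 1 := Real.sqrt_one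
  set r := (1 - u) / 2 with hr
  have hr0 : 0 ≤ r := by rw [hr]; linarith
  have hrx : r = x + r ^ 2 := by rw [hr]; nlinarith [husq]
  set g : ℕ → ℝ := fun k => c2 k * x ^ (k + 1) with hg
  have hgnn : ∀ k, 0 ≤ g k := fun k => mul_nonneg (c2_nonneg k) (pow_nonneg hx0 _)
  have hg0 : g 0 = x := by simp [hg, c2_zero]
  have hstep : ∀ k, g (k + 1) = ∑ i ∈ range (k + 1), g i * g (k - i) := by
    intro k
    simp only [hg]
    rw [c2_succ, Finset.sum_mul]
    refine Finset.sum_congr rfl fun i hi => ?_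
    have hik : i ≤ k := Nat.lt_succ_iff.mp (Finset.mem_range.mp hi)
    have hxp : x ^ (k + 1 + 1) = x ^ (i + 1) * x ^ (k - i + 1) := by
      rw [← pow_add]; congr 1; omega
    rw [hxp]; ring
  have hpart : ∀ N, ∑ k ∈ range N, g k ≤ r := by
    intro N
    induction N with
    | zero => simpa using hr0
    | succ N ih =>
      rw [Finset.sum_range_succ']
      have e1 : ∑ i ∈ range N, g (i + 1)
          = ∑ k ∈ range N, ∑ i ∈ range (k + 1), g i * g (k - i) :=
        Finset.sum_congr rfl fun k _ => hstep k
      have e2 : ∑ k ∈ range N, ∑ i ∈ range (k + 1), g i * g (k - i)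
          ≤ (∑ k ∈ range N, g k) ^ 2 := double_sum_le g hgnn N
      have e3 : (∑ k ∈ range N, g k) ^ 2 ≤ r ^ 2 := by
        have h0 : 0 ≤ ∑ k ∈ range N, g k := Finset.sum_nonneg fun k _ => hgnn k
        nlinarith
      rw [hg0]
      linarith [e1 ▸ e2]
  have hsum : Summable g := summable_of_sum_range_le hgnn hpart
  have hT_le : ∑' k, g k ≤ r := Real.tsum_le_of_sum_range_le hgnn hpart
  have hT0 : 0 ≤ ∑' k, g k := tsum_nonneg hgnn
  set T := ∑' k, g k with hT
  -- Cauchy product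
  have hnorm : Summable fun k => ‖g k‖ := by
    simpa [Real.norm_of_nonneg (hgnn _)] using hsum
  have hcauchy : T * T = ∑' n, ∑ p ∈ Finset.HasAntidiagonal.antidiagonal n, g p.1 * g p.2 :=
    tsum_mul_tsum_eq_tsum_sum_antidiagonal_of_summable_norm hnorm hnorm
  have hrec : ∀ n, ∑ p ∈ Finset.HasAntidiagonal.antidiagonal n, g p.1 * g p.2 = g (n + 1) := by
    intro n
    rw [Finset.Nat.sum_antidiagonal_eq_sum_range_succ_mk]
    exact (hstep n).symm
  have hshift : T = g 0 + ∑' n, g (n + 1) := hsum.tsum_eq_zero_add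
  have hTT : T * T = T - x := by
    rw [hcauchy]
    simp only [hrec]
    have := hshift
    rw [hg0] at this
    linarith
  -- T is a root of t^2 - t + x = 0, and T ≤ r, hence T = r
  have hfact : (T - r) * (T - (1 - r)) = 0 := by
    have hrr : r * (1 - r) = x := by rw [hr]; nlinarith [husq]
    nlinarith [hTT, hrr]
  have hTr : T = r := by
    rcases mul_eq_zero.mp hfact with h | h
    · linarith
    · have h1 : T = 1 - r := by linarith
      have : 1 - r ≤ r := h1 ▸ hT_le
      have : u = 0 := by rw [hr] at this; linarith
      rw [h1, hr, this]; ring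
  have := hsum.hasSum
  rw [← hT, hTr, hr] at this
  exact this

lemma eta_eq (p : ℝ) (k : ℕ) : 2 * p * eta2 p k = 2 * (c2 k * (p * (1 - p)) ^ (k + 1)) := by
  unfold eta2; rw [mul_pow]; ring

lemma hasSum_marg (p : ℝ) (h1 : 1 / 2 ≤ p) (h2 : p ≤ 1) :
    HasSum (fun k => 2 * p * eta2 p k) (2 * (1 - p)) := by
  have hx0 : 0 ≤ p * (1 - p) := mul_nonneg (by linarith) (by linarith)
  have hx : p * (1 - p) ≤ 1 / 4 := by nlinarith
  have h := (catalanSum _ hx0 hx).mul_left 2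
  have hs : Real.sqrt (1 - 4 * (p * (1 - p))) = 2 * p - 1 := by
    rw [show 1 - 4 * (p * (1 - p)) = (2 * p - 1) ^ 2 by ring, Real.sqrt_sq (by linarith)]
  rw [hs] at h
  have hv : 2 * ((1 - (2 * p - 1)) / 2) = 2 * (1 - p) := by ring
  rw [hv] at h
  have hf : (fun k => 2 * p * eta2 p k) = fun i => 2 * (c2 i * (p * (1 - p)) ^ (i + 1)) :=
    funext fun k => eta_eq p k
  rw [hf]; exact h

lemma eta_nonneg (p : ℝ) (h1 : 0 ≤ p) (h2 : p ≤ 1) (k : ℕ) : 0 ≤ 2 * p * eta2 p k := by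
  rw [eta_eq]
  have h : 0 ≤ p * (1 - p) := mul_nonneg h1 (by linarith)
  exact mul_nonneg (by norm_num) (mul_nonneg (c2_nonneg k) (pow_nonneg h _))

lemma eta_mono (p₁ p₂ : ℝ) (h1 : 1 / 2 ≤ p₁) (h12 : p₁ ≤ p₂) (h2 : p₂ ≤ 1) (k : ℕ) :
    2 * p₂ * eta2 p₂ k ≤ 2 * p₁ * eta2 p₁ k := by
  rw [eta_eq, eta_eq]
  have hq : p₂ * (1 - p₂) ≤ p₁ * (1 - p₁) := by nlinarith
  have hq0 : 0 ≤ p₂ * (1 - p₂) := mul_nonneg (by linarith) (by linarith)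
  have := c2_nonneg k
  gcongr

/-- For `d = 2` and `1/2 ≤ p₁ < p₂ ≤ 1` there is a coupling (a probability measure on
`ℕ∞ × ℕ∞` with the correct marginals) under which `L*(p₁) ≤ L*(p₂)` a.s. -/
theorem coupling_Lstar (p₁ p₂ : ℝ) (h1 : 1 / 2 ≤ p₁) (h12 : p₁ < p₂) (h2 : p₂ ≤ 1) :
    ∃ μ : MeasureTheory.Measure (ℕ∞ × ℕ∞), MeasureTheory.IsProbabilityMeasure μ ∧
      (∀ k : ℕ, μ.map Prod.fst {(k : ℕ∞)} = ENNReal.ofReal (2 * p₁ * eta2 p₁ k)) ∧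
      μ.map Prod.fst {(⊤ : ℕ∞)} = ENNReal.ofReal (p₁ * etaInf2 p₁) ∧
      (∀ k : ℕ, μ.map Prod.snd {(k : ℕ∞)} = ENNReal.ofReal (2 * p₂ * eta2 p₂ k)) ∧
      μ.map Prod.snd {(⊤ : ℕ∞)} = ENNReal.ofReal (p₂ * etaInf2 p₂) ∧
      μ {x : ℕ∞ × ℕ∞ | x.1 ≤ x.2} = 1 := by
  classical
  set a : ℕ → ℝ := fun k => 2 * p₁ * eta2 p₁ k with ha
  set b : ℕ → ℝ := fun k => 2 * p₂ * eta2 p₂ k with hb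
  have hba : ∀ k, b k ≤ a k := fun k => eta_mono p₁ p₂ h1 h12.le h2 k
  have hb0 : ∀ k, 0 ≤ b k := fun k => eta_nonneg p₂ (by linarith) h2 k
  have ha0 : ∀ k, 0 ≤ a k := fun k => eta_nonneg p₁ (by linarith) (by linarith) k
  have hSa : HasSum a (2 * (1 - p₁)) := hasSum_marg p₁ h1 (by linarith)
  have hSb : HasSum b (2 * (1 - p₂)) := hasSum_marg p₂ (by linarith) h2
  have hSw : HasSum (fun k => a k - b k) (2 * p₂ - 2 * p₁) := by
    have := hSa.sub hSb
    rw [show 2 * p₂ - 2 * p₁ = 2 * (1 - p₁) - 2 * (1 - p₂) by ring]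
    exact this
  set B : ℕ → ℝ≥0∞ := fun k => ENNReal.ofReal (b k) with hB
  set W : ℕ → ℝ≥0∞ := fun k => ENNReal.ofReal (a k - b k) with hW
  set Z : ℝ≥0∞ := ENNReal.ofReal (2 * p₁ - 1) with hZ
  set μ : Measure (ℕ∞ × ℕ∞) :=
      (Measure.sum fun k : ℕ => B k • Measure.dirac ((k : ℕ∞), (k : ℕ∞)))
    + (Measure.sum fun k : ℕ => W k • Measure.dirac ((k : ℕ∞), (⊤ : ℕ∞)))
    + Z • Measure.dirac ((⊤ : ℕ∞), (⊤ : ℕ∞)) with hμ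
  have evalμ : ∀ s : Set (ℕ∞ × ℕ∞), MeasurableSet s →
      μ s = (∑' k : ℕ, if ((k : ℕ∞), (k : ℕ∞)) ∈ s then B k else 0)
          + (∑' k : ℕ, if ((k : ℕ∞), (⊤ : ℕ∞)) ∈ s then W k else 0)
          + (if ((⊤ : ℕ∞), (⊤ : ℕ∞)) ∈ s then Z else 0) := by
    intro s hs
    simp only [hμ, Measure.coe_add, Pi.add_apply, Measure.sum_apply _ hs, Measure.smul_apply,
      Measure.dirac_apply' _ hs, Set.indicator_apply, smul_eq_mul, mul_ite, mul_one, mul_zero,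
      Pi.one_apply]
  -- tsum computations
  have htB : ∑' k : ℕ, B k = ENNReal.ofReal (2 * (1 - p₂)) := by
    rw [hB, ← ENNReal.ofReal_tsum_of_nonneg hb0 hSb.summable, hSb.tsum_eq]
  have htW : ∑' k : ℕ, W k = ENNReal.ofReal (2 * p₂ - 2 * p₁) := by
    rw [hW, ← ENNReal.ofReal_tsum_of_nonneg (fun k => by linarith [hba k]) hSw.summable,
      hSw.tsum_eq]
  refine ⟨μ, ?_, ?_, ?_, ?_, ?_, ?_⟩
  · constructor
    rw [evalμ Set.univ MeasurableSet.univ]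
    simp only [Set.mem_univ, if_true]
    rw [htB, htW, ← ENNReal.ofReal_add (by linarith) (by linarith),
      ← ENNReal.ofReal_add (by linarith) (by linarith), ← ENNReal.ofReal_one]
    congr 1
    ring
  · intro j
    rw [Measure.map_apply measurable_fst (measurableSet_singleton _),
      evalμ _ (measurable_fst (measurableSet_singleton _))]
    have e1 : (∑' k : ℕ, if ((k : ℕ∞), (k : ℕ∞)) ∈ Prod.fst ⁻¹' {(j : ℕ∞)} then B k else 0)
        = B j := by
      have := tsum_eq_single (L := SummationFilter.unconditional ℕ) (f := fun k : ℕ => if (((k : ℕ∞), (k : ℕ∞))) ∈ Prod.fst ⁻¹' {(j : ℕ∞)} then B k else 0) j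
        (by intro k hk; simp [Nat.cast_inj, hk])
      simpa using this
    have e2 : (∑' k : ℕ, if ((k : ℕ∞), (⊤ : ℕ∞)) ∈ Prod.fst ⁻¹' {(j : ℕ∞)} then W k else 0)
        = W j := by
      have := tsum_eq_single (L := SummationFilter.unconditional ℕ) (f := fun k : ℕ => if (((k : ℕ∞), (⊤ : ℕ∞))) ∈ Prod.fst ⁻¹' {(j : ℕ∞)} then W k else 0) j
        (by intro k hk; simp [Nat.cast_inj, hk])
      simpa using this
    rw [e1, e2]
    have e3 : (((⊤ : ℕ∞), (⊤ : ℕ∞)) ∈ Prod.fst ⁻¹' {(j : ℕ∞)}) = False := by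
      simp
    rw [e3, if_false, add_zero, hB, hW, ← ENNReal.ofReal_add (hb0 j) (by linarith [hba j])]
    congr 1
    ring
  · rw [Measure.map_apply measurable_fst (measurableSet_singleton _),
      evalμ _ (measurable_fst (measurableSet_singleton _))]
    have e1 : (∑' k : ℕ, if ((k : ℕ∞), (k : ℕ∞)) ∈ Prod.fst ⁻¹' {(⊤ : ℕ∞)} then B k else 0)
        = 0 := by
      convert tsum_zero with k
      simp
    have e2 : (∑' k : ℕ, if ((k : ℕ∞), (⊤ : ℕ∞)) ∈ Prod.fst ⁻¹' {(⊤ : ℕ∞)} then W k else 0)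
        = 0 := by
      convert tsum_zero with k
      simp
    rw [e1, e2, if_pos (show ((⊤ : ℕ∞), (⊤ : ℕ∞)) ∈ Prod.fst ⁻¹' {(⊤ : ℕ∞)} by simp),
      zero_add, zero_add, hZ]
    have hp1 : p₁ ≠ 0 := ne_of_gt (by linarith)
    congr 1
    unfold etaInf2
    field_simp
  · intro j
    rw [Measure.map_apply measurable_snd (measurableSet_singleton _),
      evalμ _ (measurable_snd (measurableSet_singleton _))]
    have e1 : (∑' k : ℕ, if ((k : ℕ∞), (k : ℕ∞)) ∈ Prod.snd ⁻¹' {(j : ℕ∞)} then B k else 0)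
        = B j := by
      have := tsum_eq_single (L := SummationFilter.unconditional ℕ) (f := fun k : ℕ => if (((k : ℕ∞), (k : ℕ∞))) ∈ Prod.snd ⁻¹' {(j : ℕ∞)} then B k else 0) j
        (by intro k hk; simp [Nat.cast_inj, hk])
      simpa using this
    have e2 : (∑' k : ℕ, if ((k : ℕ∞), (⊤ : ℕ∞)) ∈ Prod.snd ⁻¹' {(j : ℕ∞)} then W k else 0)
        = 0 := by
      convert tsum_zero with k
      simp
    rw [e1, e2]
    have e3 : (((⊤ : ℕ∞), (⊤ : ℕ∞)) ∈ Prod.snd ⁻¹' {(j : ℕ∞)}) = False := by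
      simp
    rw [e3, if_false, add_zero, add_zero, hB]
  · rw [Measure.map_apply measurable_snd (measurableSet_singleton _),
      evalμ _ (measurable_snd (measurableSet_singleton _))]
    have e1 : (∑' k : ℕ, if ((k : ℕ∞), (k : ℕ∞)) ∈ Prod.snd ⁻¹' {(⊤ : ℕ∞)} then B k else 0)
        = 0 := by
      convert tsum_zero with k
      simp
    have e2 : (∑' k : ℕ, if ((k : ℕ∞), (⊤ : ℕ∞)) ∈ Prod.snd ⁻¹' {(⊤ : ℕ∞)} then W k else 0)
        = ∑' k : ℕ, W k := by
      congr 1; funext k; simp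
    rw [e1, e2, htW, if_pos (show ((⊤ : ℕ∞), (⊤ : ℕ∞)) ∈ Prod.snd ⁻¹' {(⊤ : ℕ∞)} by simp),
      zero_add, hZ, ← ENNReal.ofReal_add (by linarith) (by linarith)]
    have hp2 : p₂ ≠ 0 := ne_of_gt (by linarith)
    congr 1
    unfold etaInf2
    field_simp
    ring
  · have hSmeas : MeasurableSet {x : ℕ∞ × ℕ∞ | x.1 ≤ x.2} :=
      (Set.to_countable _).measurableSet
    rw [evalμ _ hSmeas]
    simp only [Set.mem_setOf_eq, le_refl, le_top, if_true]
    rw [htB, htW, hZ, ← ENNReal.ofReal_add (by linarith) (by linarith),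
      ← ENNReal.ofReal_add (by linarith) (by linarith), ← ENNReal.ofReal_one]
    congr 1
    ring
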